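/- Let G be a finite group with an abelian subgroup A of index 2, and suppose there exists x ∈ G with x ∉ A, x^2 ∈ A, x^2 ≠ 1, and x·a·x⁻¹ = a⁻¹ for all a ∈ A (so G is the generalized dicyclic group Dic(A)). If the subgroup A^2 = {a^2 : a ∈ A} of A has order exactly 2 (equivalently, A is of type (Z_2)^m × Z_4), then CD(G) is exactly the set of subgroups H of G with Z(G) ≤ H, and CD(G) is a quasi-antichain of width 3, namely the lattice interval between Z(G) and G. -/

import Mathlib

/-- Subgroup `Z ∪ Z·y` for a central subgroup `Z` and an element `y` with `y ^ 2 ∈ Z`. -/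
def cosetSub (G : Type*) [Group G] (Z : Subgroup G) (hZ : Z ≤ Subgroup.center G)
    (y : G) (hy : y ^ 2 ∈ Z) : Subgroup G where
  carrier := {g | g ∈ Z ∨ g * y⁻¹ ∈ Z}
  one_mem' := Or.inl Z.one_mem
  mul_mem' := by
    rintro a b (ha | ha) (hb | hb)
    · exact Or.inl (Z.mul_mem ha hb)
    · refine Or.inr ?_
      have e : a * b * y⁻¹ = a * (b * y⁻¹) := by group
      rw [e]; exact Z.mul_mem ha hb
    · refine Or.inr ?_
      have hbc := Subgroup.mem_center_iff.mp (hZ hb) y⁻¹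
      have e : a * b * y⁻¹ = a * y⁻¹ * b := by
        rw [mul_assoc, ← hbc, ← mul_assoc]
      rw [e]; exact Z.mul_mem ha hb
    · refine Or.inl ?_
      have hd := Subgroup.mem_center_iff.mp (hZ hb) y
      have e : a * b = a * y⁻¹ * (b * y⁻¹) * y ^ 2 := by
        have e1 : a * b = a * y⁻¹ * (y * (b * y⁻¹) * y) := by group
        rw [e1, hd]; group
      rw [e]; exact Z.mul_mem (Z.mul_mem ha hb) hy
  inv_mem' := by
    rintro a (ha | ha)
    · exact Or.inl (Z.inv_mem ha)
    · refine Or.inr ?_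
      have hc := Subgroup.mem_center_iff.mp (hZ (Z.inv_mem ha)) y⁻¹
      have e : a⁻¹ * y⁻¹ = (a * y⁻¹)⁻¹ * (y ^ 2)⁻¹ := by
        have e1 : a⁻¹ * y⁻¹ = y⁻¹ * (a * y⁻¹)⁻¹ * y⁻¹ := by group
        rw [e1, hc]; group
      rw [e]; exact Z.mul_mem (Z.inv_mem ha) (Z.inv_mem hy)

theorem mem_cosetSub {G : Type*} [Group G] {Z : Subgroup G} {hZ : Z ≤ Subgroup.center G}
    {y : G} {hy : y ^ 2 ∈ Z} {g : G} :
    g ∈ cosetSub G Z hZ y hy ↔ g ∈ Z ∨ g * y⁻¹ ∈ Z := Iff.rfl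

theorem cosetSub_congr {G : Type*} [Group G] {Z : Subgroup G} (hZ : Z ≤ Subgroup.center G)
    {y z : G} (hy : y ^ 2 ∈ Z) (hz : z ^ 2 ∈ Z) (h : y * z⁻¹ ∈ Z) :
    cosetSub G Z hZ y hy = cosetSub G Z hZ z hz := by
  ext g
  rw [mem_cosetSub, mem_cosetSub]
  constructor
  · rintro (hg | hg)
    · exact Or.inl hg
    · refine Or.inr ?_
      have e : g * z⁻¹ = g * y⁻¹ * (y * z⁻¹) := by group
      rw [e]; exact Z.mul_mem hg h
  · rintro (hg | hg)
    · exact Or.inl hg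
    · refine Or.inr ?_
      have e : g * y⁻¹ = g * z⁻¹ * (y * z⁻¹)⁻¹ := by group
      rw [e]; exact Z.mul_mem hg (Z.inv_mem h)

theorem mul_lt_mul_nat {a b c d : ℕ} (h1 : a < b) (h2 : c ≤ d) (hd : 0 < d) :
    a * c < b * d :=
  lt_of_le_of_lt (Nat.mul_le_mul le_rfl h2) (mul_lt_mul_of_pos_right h1 hd)

/-- The Chermak-Delgado measure of a subgroup `H` of `G`: `|H| · |C_G(H)|`. -/
noncomputable def cdMeasure (G : Type*) [Group G] (H : Subgroup G) : ℕ :=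
  Nat.card H * Nat.card (Subgroup.centralizer (H : Set G))

/-- The Chermak-Delgado lattice of `G`: the set of subgroups whose
Chermak-Delgado measure is maximal. -/
def CD (G : Type*) [Group G] : Set (Subgroup G) :=
  {H : Subgroup G | ∀ K : Subgroup G, cdMeasure G K ≤ cdMeasure G H}

theorem stmt_11 (G : Type*) [Group G] [Finite G]
    (A : Subgroup G) (hab : IsMulCommutative A) (hiA : A.index = 2)
    (x : G) (hx : x ∉ A) (hx2 : x ^ 2 ∈ A) (hx2' : x ^ 2 ≠ 1)
    (hinv : ∀ a ∈ A, x * a * x⁻¹ = a⁻¹)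
    (hsq : {g : G | ∃ a ∈ A, g = a ^ 2}.ncard = 2) :
    CD G = {H : Subgroup G | Subgroup.center G ≤ H} ∧
    {H : Subgroup G | Subgroup.center G < H ∧ H < ⊤}.ncard = 3 := by
  classical
  haveI := hab
  have hxi : x⁻¹ ∉ A := fun h => hx (by simpa using A.inv_mem h)
  -- two elements outside `A` multiply into `A`
  have hcoset : ∀ g : G, g ∉ A → ∀ h : G, h ∉ A → g⁻¹ * h ∈ A := by
    intro g hg h hh
    have h2 : Nat.card (G ⧸ A) = 2 := hiA
    obtain ⟨u, v, huv, huniv⟩ := Nat.card_eq_two_iff.mp h2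
    have hmem : ∀ q : G ⧸ A, q = u ∨ q = v := by
      intro q
      have : q ∈ ({u, v} : Set (G ⧸ A)) := by rw [huniv]; trivial
      simpa using this
    have hne : ∀ k : G, k ∉ A → ((k : G ⧸ A) ≠ ((1 : G) : G ⧸ A)) := by
      intro k hk e
      exact hk (by simpa using QuotientGroup.eq.mp e)
    have key : (g : G ⧸ A) = (h : G ⧸ A) := by
      rcases hmem ((1 : G) : G ⧸ A) with e1 | e1 <;>
      rcases hmem (g : G ⧸ A) with e2 | e2 <;>
      rcases hmem (h : G ⧸ A) with e3 | e3 <;>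
      first
        | exact absurd (e2.trans e1.symm) (hne g hg)
        | exact absurd (e3.trans e1.symm) (hne h hh)
        | rw [e2, e3]
    exact QuotientGroup.eq.mp key
  have hmulA : ∀ g : G, g ∉ A → ∀ h : G, h ∉ A → g * h ∈ A := by
    intro g hg h hh
    have hgi : g⁻¹ ∉ A := fun e => hg (by simpa using A.inv_mem e)
    simpa using hcoset g⁻¹ hgi h hh
  -- every element outside `A` inverts `A` by conjugation
  have hconj : ∀ g : G, g ∉ A → ∀ a ∈ A, g * a * g⁻¹ = a⁻¹ := by
    intro g hg a ha
    have hc : x⁻¹ * g ∈ A := hcoset x hx g hg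
    have hca : (x⁻¹ * g) * a = a * (x⁻¹ * g) :=
      Subgroup.mul_comm_of_mem_isMulCommutative (H := A) hc ha
    have e : g * a * g⁻¹ = x * ((x⁻¹ * g) * a * (x⁻¹ * g)⁻¹) * x⁻¹ := by group
    rw [e, hca, mul_inv_cancel_right]
    exact hinv a ha
  -- the subgroup Ω of elements of A of order dividing 2
  let Ω : Subgroup G :=
  { carrier := {g | g ∈ A ∧ g ^ 2 = 1}
    one_mem' := ⟨A.one_mem, one_pow 2⟩
    mul_mem' := by
      rintro p q ⟨hp, hp2⟩ ⟨hq, hq2⟩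
      refine ⟨A.mul_mem hp hq, ?_⟩
      have hc : Commute p q := Subgroup.mul_comm_of_mem_isMulCommutative (H := A) hp hq
      rw [hc.mul_pow, hp2, hq2, one_mul]
    inv_mem' := by
      rintro p ⟨hp, hp2⟩
      exact ⟨A.inv_mem hp, by rw [inv_pow, hp2, inv_one]⟩ }
  have hΩmem : ∀ g : G, g ∈ Ω ↔ g ∈ A ∧ g ^ 2 = 1 := fun g => Iff.rfl
  have hΩleA : Ω ≤ A := fun g hg => ((hΩmem g).mp hg).1
  -- an element of A of order 4 exists
  have hex : ∃ a₀, a₀ ∈ A ∧ a₀ ^ 2 ≠ 1 := by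
    by_contra hcon
    push_neg at hcon
    have hone : {g : G | ∃ a ∈ A, g = a ^ 2} = {1} := by
      ext g
      simp only [Set.mem_setOf_eq, Set.mem_singleton_iff]
      constructor
      · rintro ⟨a, ha, rfl⟩; exact hcon a ha
      · rintro rfl; exact ⟨1, A.one_mem, (one_pow 2).symm⟩
    rw [hone] at hsq
    simp at hsq
  obtain ⟨a₀, ha₀, ha₀2⟩ := hex
  -- all nontrivial squares in A coincide
  have hsq_eq : ∀ a ∈ A, ∀ b ∈ A, a ^ 2 ≠ 1 → b ^ 2 ≠ 1 → a ^ 2 = b ^ 2 := by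
    intro a ha b hb ha2 hb2
    obtain ⟨u, v, huv, hset⟩ := Set.ncard_eq_two.mp hsq
    have hmem : ∀ g : G, (∃ c ∈ A, g = c ^ 2) → (g = u ∨ g = v) := by
      intro g hg
      have : g ∈ ({u, v} : Set G) := hset ▸ hg
      simpa using this
    have h1 := hmem 1 ⟨1, A.one_mem, (one_pow 2).symm⟩
    have h2 := hmem (a ^ 2) ⟨a, ha, rfl⟩
    have h3 := hmem (b ^ 2) ⟨b, hb, rfl⟩
    rcases h1 with rfl | rfl
    · rcases h2 with h2 | h2
      · exact absurd h2 ha2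
      · rcases h3 with h3 | h3
        · exact absurd h3 hb2
        · rw [h2, h3]
    · rcases h2 with h2 | h2
      · rcases h3 with h3 | h3
        · rw [h2, h3]
        · exact absurd h3 hb2
      · exact absurd h2 ha2
  -- the center is exactly Ω
  have hcent : ∀ g : G, g ∈ Subgroup.center G ↔ (g ∈ A ∧ g ^ 2 = 1) := by
    intro g
    constructor
    · intro hg
      have hgA : g ∈ A := by
        by_contra hgA
        have h1 := hconj g hgA a₀ ha₀
        have h2 : g * a₀ * g⁻¹ = a₀ := by
          rw [← Subgroup.mem_center_iff.mp hg a₀, mul_inv_cancel_right]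
        exact ha₀2 (by rw [pow_two]; exact eq_inv_iff_mul_eq_one.mp (h2.symm.trans h1))
      refine ⟨hgA, ?_⟩
      have h1 := hinv g hgA
      have h2 : x * g * x⁻¹ = g := by
        rw [Subgroup.mem_center_iff.mp hg x, mul_inv_cancel_right]
      rw [pow_two]; exact eq_inv_iff_mul_eq_one.mp (h2.symm.trans h1)
    · rintro ⟨hgA, hg2⟩
      rw [Subgroup.mem_center_iff]
      intro h
      by_cases hh : h ∈ A
      · exact Subgroup.mul_comm_of_mem_isMulCommutative (H := A) hh hgA
      · have h1 := hconj h hh g hgA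
        have hginv : g⁻¹ = g := by
          rw [inv_eq_of_mul_eq_one_right (by rw [← pow_two]; exact hg2)]
        have h2 : h * g * h⁻¹ = g := by rw [h1, hginv]
        calc h * g = (h * g * h⁻¹) * h := by group
          _ = g * h := by rw [h2]
  have hZ : Subgroup.center G = Ω :=
    SetLike.ext fun g => (hcent g).trans (hΩmem g).symm
  have hΩle : Ω ≤ Subgroup.center G := le_of_eq hZ.symm
  -- cardinalities
  set cΩ := Nat.card Ω with hcΩdef
  have hcΩpos : 0 < cΩ := Nat.card_pos
  have hA_card : Nat.card A = 2 * cΩ := by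
    have hφmul : ∀ a b : A, ((a * b : A) : G) ^ 2 = ((a : G)) ^ 2 * ((b : G)) ^ 2 := by
      intro a b
      have hc : Commute (a : G) (b : G) :=
        Subgroup.mul_comm_of_mem_isMulCommutative (H := A) a.2 b.2
      rw [Subgroup.coe_mul, hc.mul_pow]
    let φ : A →* G :=
    { toFun := fun a => (a : G) ^ 2
      map_one' := by simp
      map_mul' := hφmul }
    have e1 : Nat.card A = Nat.card (A ⧸ φ.ker) * Nat.card φ.ker :=
      Subgroup.card_eq_card_quotient_mul_card_subgroup φ.ker
    have e2 : Nat.card (A ⧸ φ.ker) = Nat.card φ.range :=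
      Nat.card_congr (QuotientGroup.quotientKerEquivRange φ).toEquiv
    have e3 : Nat.card φ.ker = cΩ := by
      refine Nat.card_congr ?_
      exact
      { toFun := fun k => ⟨((k : A) : G), ⟨(k : A).2, k.2⟩⟩
        invFun := fun w => ⟨⟨(w : G), w.2.1⟩, w.2.2⟩
        left_inv := fun k => Subtype.ext (Subtype.ext rfl)
        right_inv := fun w => Subtype.ext rfl }
    have hs : (φ.range : Set G) = {g : G | ∃ a ∈ A, g = a ^ 2} := by
      ext g
      simp only [MonoidHom.coe_range, Set.mem_range, Set.mem_setOf_eq]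
      constructor
      · rintro ⟨a, rfl⟩; exact ⟨a, a.2, rfl⟩
      · rintro ⟨a, ha, rfl⟩; exact ⟨⟨a, ha⟩, rfl⟩
    have e4 : Nat.card φ.range = 2 := by
      have e5 : Nat.card φ.range = ({g : G | ∃ a ∈ A, g = a ^ 2}).ncard := by
        rw [← hs, ← Nat.card_coe_set_eq]
        rfl
      rw [e5, hsq]
    rw [e1, e2, e3, e4]
  have hG_card : Nat.card G = 4 * cΩ := by
    rw [← Subgroup.index_mul_card (H := A), hiA, hA_card]
    ring
  haveI hAnorm : A.Normal := by
    constructor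
    intro a ha g
    by_cases hg : g ∈ A
    · exact A.mul_mem (A.mul_mem hg ha) (A.inv_mem hg)
    · rw [hconj g hg a ha]; exact A.inv_mem ha
  -- counting in cosets of A
  have einf : ∀ K : Subgroup G,
      Nat.card (A.subgroupOf K) = Nat.card (A ⊓ K : Subgroup G) := by
    intro K
    refine Nat.card_congr ?_
    exact
    { toFun := fun p => ⟨((p : K) : G), Subgroup.mem_inf.mpr ⟨p.2, (p : K).2⟩⟩
      invFun := fun w => ⟨⟨(w : G), (Subgroup.mem_inf.mp w.2).2⟩, (Subgroup.mem_inf.mp w.2).1⟩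
      left_inv := fun p => Subtype.ext (Subtype.ext rfl)
      right_inv := fun w => Subtype.ext rfl }
  have hrel2 : ∀ K : Subgroup G, A.relIndex K ∣ 2 := by
    intro K
    have h := Subgroup.relIndex_dvd_index_of_normal (H := A) (K := K)
    rwa [hiA] at h
  have hKcard : ∀ K : Subgroup G,
      A.relIndex K * Nat.card (A ⊓ K : Subgroup G) = Nat.card K := by
    intro K
    rw [← einf K]
    exact Subgroup.index_mul_card (A.subgroupOf K)
  have hcard_le2 : ∀ K U : Subgroup G, (A ⊓ K ≤ U) → Nat.card K ≤ 2 * Nat.card U := by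
    intro K U hU
    calc Nat.card K = A.relIndex K * Nat.card (A ⊓ K : Subgroup G) := (hKcard K).symm
      _ ≤ 2 * Nat.card U :=
        Nat.mul_le_mul (Nat.le_of_dvd two_pos (hrel2 K)) (Subgroup.card_le_of_le hU)
  have hcard_eq2 : ∀ K : Subgroup G, ¬ K ≤ A →
      Nat.card K = 2 * Nat.card (A ⊓ K : Subgroup G) := by
    intro K hK
    have h1 : A.relIndex K ≠ 1 := fun e => hK (Subgroup.relIndex_eq_one.mp e)
    rcases (Nat.Prime.eq_one_or_self_of_dvd Nat.prime_two _ (hrel2 K)) with e | e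
    · exact absurd e h1
    · rw [← hKcard K, e]
  -- dichotomy for subgroups between Ω and A
  have hdich : ∀ K : Subgroup G, Ω ≤ K → K ≤ A → K = Ω ∨ K = A := by
    intro K h1 h2
    obtain ⟨k, hk⟩ := Subgroup.card_dvd_of_le h1
    have hd2 : Nat.card K ∣ 2 * cΩ := hA_card ▸ Subgroup.card_dvd_of_le h2
    have hk2 : k ∣ 2 := by
      rw [hk, Nat.mul_comm 2 cΩ] at hd2
      exact (Nat.mul_dvd_mul_iff_left hcΩpos).mp hd2
    rcases (Nat.Prime.eq_one_or_self_of_dvd Nat.prime_two _ hk2) with e | e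
    · left
      refine (Subgroup.eq_of_le_of_card_ge h1 ?_).symm
      rw [hk, e, mul_one]
    · right
      refine Subgroup.eq_of_le_of_card_ge h2 ?_
      rw [hA_card, hk, e]
      omega
  -- centralizer bounds
  have hcentA : ∀ (S : Set G) (a : G), a ∈ S → a ∈ A → a ^ 2 ≠ 1 →
      Subgroup.centralizer S ≤ A := by
    intro S a haS haA ha2 g hg
    by_contra hgA
    have h1 := hconj g hgA a haA
    have h2 : g * a * g⁻¹ = a := by
      rw [← Subgroup.mem_centralizer_iff.mp hg a haS, mul_inv_cancel_right]
    exact ha2 (by rw [pow_two]; exact eq_inv_iff_mul_eq_one.mp (h2.symm.trans h1))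
  have hcentΩ : ∀ (S : Set G) (h : G), h ∈ S → h ∉ A →
      ∀ g ∈ Subgroup.centralizer S, g ∈ A → g ∈ Ω := by
    intro S h hhS hhA g hg hgA
    have h1 := hconj h hhA g hgA
    have h2 : h * g * h⁻¹ = g := by
      rw [Subgroup.mem_centralizer_iff.mp hg h hhS, mul_inv_cancel_right]
    exact (hΩmem g).mpr
      ⟨hgA, by rw [pow_two]; exact eq_inv_iff_mul_eq_one.mp (h2.symm.trans h1)⟩
  have hcentΩ_top : Subgroup.centralizer (Ω : Set G) = ⊤ := by
    rw [eq_top_iff]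
    intro g _
    rw [Subgroup.mem_centralizer_iff]
    intro z hz
    exact (Subgroup.mem_center_iff.mp (hΩle hz) g).symm
  have hcentA_eq : Subgroup.centralizer (A : Set G) = A := by
    apply le_antisymm
    · exact hcentA (A : Set G) a₀ ha₀ ha₀ ha₀2
    · intro a ha
      rw [Subgroup.mem_centralizer_iff]
      intro b hb
      exact Subgroup.mul_comm_of_mem_isMulCommutative (H := A) hb ha
  -- if H contains Ω, is not inside A, and meets A outside Ω, then H = ⊤
  have htop : ∀ H : Subgroup G, Ω ≤ H → ¬ H ≤ A →
      (∃ a, a ∈ H ∧ a ∈ A ∧ a ∉ Ω) → H = ⊤ := by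
    rintro H hΩH hHA ⟨a, haH, haA, haΩ⟩
    have hAH : A ≤ H := by
      have h1 : Ω ≤ A ⊓ H := le_inf hΩleA hΩH
      rcases hdich (A ⊓ H) h1 inf_le_left with e | e
      · exact absurd (e ▸ (Subgroup.mem_inf.mpr ⟨haA, haH⟩)) haΩ
      · rw [← e]; exact inf_le_right
    obtain ⟨h, hhH, hhA⟩ : ∃ h, h ∈ H ∧ h ∉ A := by
      rw [SetLike.le_def] at hHA; push_neg at hHA; exact hHA
    obtain ⟨k, hk⟩ := Subgroup.card_dvd_of_le hAH
    have hd2 : Nat.card H ∣ 4 * cΩ := by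
      rw [← hG_card]; exact Subgroup.card_subgroup_dvd_card H
    have hk2 : k ∣ 2 := by
      rw [hk, hA_card] at hd2
      have h4 : 2 * cΩ * k ∣ 2 * cΩ * 2 := by
        have : (4 : ℕ) * cΩ = 2 * cΩ * 2 := by ring
        rwa [this] at hd2
      exact (Nat.mul_dvd_mul_iff_left (by positivity)).mp h4
    rcases (Nat.Prime.eq_one_or_self_of_dvd Nat.prime_two _ hk2) with e | e
    · exfalso
      have hcard : Nat.card H ≤ Nat.card A := by rw [hk, e, mul_one]
      exact hhA ((Subgroup.eq_of_le_of_card_ge hAH hcard) ▸ hhH)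
    · apply Subgroup.eq_top_of_card_eq
      rw [hk, e, hA_card, hG_card]
      ring
  -- the measure of every subgroup containing Ω is 4cΩ²
  have hEq : ∀ H : Subgroup G, Ω ≤ H → cdMeasure G H = 4 * cΩ ^ 2 := by
    intro H hΩH
    by_cases hHA : H ≤ A
    · rcases hdich H hΩH hHA with e | e
      · rw [e]
        show Nat.card Ω * Nat.card (Subgroup.centralizer (Ω : Set G)) = _
        rw [hcentΩ_top, Subgroup.card_top, hG_card]
        ring
      · rw [e]
        show Nat.card A * Nat.card (Subgroup.centralizer (A : Set G)) = _
        rw [hcentA_eq, hA_card]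
        ring
    · by_cases hQ : A ⊓ H ≤ Ω
      · have hinfΩ : A ⊓ H = Ω := le_antisymm hQ (le_inf hΩleA hΩH)
        have hcardH : Nat.card H = 2 * cΩ := by rw [hcard_eq2 H hHA, hinfΩ]
        obtain ⟨h, hhH, hhA⟩ : ∃ h, h ∈ H ∧ h ∉ A := by
          rw [SetLike.le_def] at hHA; push_neg at hHA; exact hHA
        have hHle : H ≤ Subgroup.centralizer (H : Set G) := by
          intro p hp
          rw [Subgroup.mem_centralizer_iff]
          intro q hq
          by_cases hpA : p ∈ A
          · have hpZ : p ∈ Subgroup.center G :=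
              hΩle (hinfΩ ▸ (Subgroup.mem_inf.mpr ⟨hpA, hp⟩))
            exact Subgroup.mem_center_iff.mp hpZ q
          · by_cases hqA : q ∈ A
            · have hqZ : q ∈ Subgroup.center G :=
                hΩle (hinfΩ ▸ (Subgroup.mem_inf.mpr ⟨hqA, hq⟩))
              exact (Subgroup.mem_center_iff.mp hqZ p).symm
            · have hdA : q * p⁻¹ ∈ A :=
                hmulA q hqA p⁻¹ (fun e => hpA (by simpa using A.inv_mem e))
              have hdH : q * p⁻¹ ∈ H := H.mul_mem hq (H.inv_mem hp)
              have hdZ : q * p⁻¹ ∈ Subgroup.center G :=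
                hΩle (hinfΩ ▸ (Subgroup.mem_inf.mpr ⟨hdA, hdH⟩))
              have hcomm := Subgroup.mem_center_iff.mp hdZ p
              calc q * p = (q * p⁻¹) * p * p := by group
                _ = p * (q * p⁻¹) * p := by rw [← hcomm]
                _ = p * q := by group
        have hub : Nat.card (Subgroup.centralizer (H : Set G)) ≤ 2 * cΩ := by
          refine hcard_le2 _ Ω ?_
          intro g hg
          obtain ⟨hgA, hgC⟩ := Subgroup.mem_inf.mp hg
          exact hcentΩ (H : Set G) h hhH hhA g hgC hgA
        have hlb : 2 * cΩ ≤ Nat.card (Subgroup.centralizer (H : Set G)) :=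
          hcardH ▸ Subgroup.card_le_of_le hHle
        show Nat.card H * Nat.card (Subgroup.centralizer (H : Set G)) = _
        rw [hcardH, le_antisymm hub hlb]
        ring
      · rw [SetLike.le_def] at hQ; push_neg at hQ
        obtain ⟨a, haAH, haΩ⟩ := hQ
        obtain ⟨haA, haH⟩ := Subgroup.mem_inf.mp haAH
        have hHtop := htop H hΩH hHA ⟨a, haH, haA, haΩ⟩
        subst hHtop
        show Nat.card (⊤ : Subgroup G) *
          Nat.card (Subgroup.centralizer (((⊤ : Subgroup G) : Set G))) = _
        rw [Subgroup.coe_top, Subgroup.centralizer_univ, Subgroup.card_top, hG_card, hZ]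
        ring
  -- the measure of every subgroup not containing Ω is < 4cΩ²
  have hLt : ∀ H : Subgroup G, ¬ Ω ≤ H → cdMeasure G H < 4 * cΩ ^ 2 := by
    intro H hn
    obtain ⟨z, hzΩ, hzH⟩ : ∃ z, z ∈ Ω ∧ z ∉ H := by
      rw [SetLike.le_def] at hn; push_neg at hn; exact hn
    have hcentG : Nat.card (Subgroup.centralizer (H : Set G)) ≤ 4 * cΩ := by
      calc Nat.card (Subgroup.centralizer (H : Set G)) ≤ Nat.card (⊤ : Subgroup G) :=
            Subgroup.card_le_of_le le_top
        _ = Nat.card G := Subgroup.card_top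
        _ = 4 * cΩ := hG_card
    by_cases hHA : H ≤ A
    · by_cases hHΩ : H ≤ Ω
      · have h1 : Nat.card H < cΩ := by
          rcases lt_or_eq_of_le (Subgroup.card_le_of_le hHΩ) with h | h
          · exact h
          · exact absurd (Subgroup.eq_of_le_of_card_ge hHΩ h.ge).ge hn
        calc cdMeasure G H
            = Nat.card H * Nat.card (Subgroup.centralizer (H : Set G)) := rfl
          _ < cΩ * (4 * cΩ) := mul_lt_mul_nat h1 hcentG (by positivity)
          _ = 4 * cΩ ^ 2 := by ring
      · obtain ⟨a, haH, haΩ⟩ : ∃ a, a ∈ H ∧ a ∉ Ω := by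
          rw [SetLike.le_def] at hHΩ; push_neg at hHΩ; exact hHΩ
        have haA : a ∈ A := hHA haH
        have ha2 : a ^ 2 ≠ 1 := fun e => haΩ ((hΩmem a).mpr ⟨haA, e⟩)
        have hC : Subgroup.centralizer (H : Set G) ≤ A := hcentA _ a haH haA ha2
        have hCcard : Nat.card (Subgroup.centralizer (H : Set G)) ≤ 2 * cΩ :=
          hA_card ▸ Subgroup.card_le_of_le hC
        have hHcard : Nat.card H < 2 * cΩ := by
          rcases lt_or_eq_of_le (Subgroup.card_le_of_le hHA) with h | h
          · rwa [hA_card] at h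
          · exfalso
            have e := Subgroup.eq_of_le_of_card_ge hHA h.ge
            exact hn (e ▸ hΩleA)
        calc cdMeasure G H
            = Nat.card H * Nat.card (Subgroup.centralizer (H : Set G)) := rfl
          _ < (2 * cΩ) * (2 * cΩ) := mul_lt_mul_nat hHcard hCcard (by positivity)
          _ = 4 * cΩ ^ 2 := by ring
    · obtain ⟨h, hhH, hhA⟩ : ∃ h, h ∈ H ∧ h ∉ A := by
        rw [SetLike.le_def] at hHA; push_neg at hHA; exact hHA
      have hC2 : Nat.card (Subgroup.centralizer (H : Set G)) ≤ 2 * cΩ := by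
        refine hcard_le2 _ Ω ?_
        intro g hg
        obtain ⟨hgA, hgC⟩ := Subgroup.mem_inf.mp hg
        exact hcentΩ (H : Set G) h hhH hhA g hgC hgA
      have hHT : H ≠ ⊤ := fun e => hzH (e ▸ Subgroup.mem_top z)
      have hHcard2 : 2 * Nat.card H ≤ 4 * cΩ := by
        have hidx0 : H.index ≠ 0 := Subgroup.index_ne_zero_of_finite
        have hidx1 : H.index ≠ 1 := fun e => hHT (Subgroup.index_eq_one.mp e)
        have hidx : 2 ≤ H.index := by omega
        calc 2 * Nat.card H ≤ H.index * Nat.card H :=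
              Nat.mul_le_mul_right _ hidx
          _ = Nat.card G := Subgroup.index_mul_card H
          _ = 4 * cΩ := hG_card
      by_cases hQ : A ⊓ H ≤ Ω
      · have hlt : Nat.card (A ⊓ H : Subgroup G) < cΩ := by
          rcases lt_or_eq_of_le (Subgroup.card_le_of_le hQ) with h' | h'
          · exact h'
          · exfalso
            have e := Subgroup.eq_of_le_of_card_ge hQ h'.ge
            exact hn (fun g hg => (Subgroup.mem_inf.mp (e.symm ▸ hg)).2)
        have hHcard : Nat.card H < 2 * cΩ := by
          rw [hcard_eq2 H hHA]; omega
        calc cdMeasure G H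
            = Nat.card H * Nat.card (Subgroup.centralizer (H : Set G)) := rfl
          _ < (2 * cΩ) * (2 * cΩ) := mul_lt_mul_nat hHcard hC2 (by positivity)
          _ = 4 * cΩ ^ 2 := by ring
      · rw [SetLike.le_def] at hQ; push_neg at hQ
        obtain ⟨a, haAH, haΩ⟩ := hQ
        obtain ⟨haA, haH⟩ := Subgroup.mem_inf.mp haAH
        have ha2 : a ^ 2 ≠ 1 := fun e => haΩ ((hΩmem a).mpr ⟨haA, e⟩)
        have hCA : Subgroup.centralizer (H : Set G) ≤ A := hcentA _ a haH haA ha2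
        have hCΩ : Subgroup.centralizer (H : Set G) ≤ Ω := fun g hg =>
          hcentΩ (H : Set G) h hhH hhA g hg (hCA hg)
        have hCcard : Nat.card (Subgroup.centralizer (H : Set G)) ≤ cΩ :=
          Subgroup.card_le_of_le hCΩ
        have hHcard : Nat.card H ≤ 2 * cΩ := by omega
        calc cdMeasure G H
            = Nat.card H * Nat.card (Subgroup.centralizer (H : Set G)) := rfl
          _ ≤ (2 * cΩ) * cΩ := Nat.mul_le_mul hHcard hCcard
          _ < 4 * cΩ ^ 2 := by
              have h0 : 0 < cΩ * cΩ := Nat.mul_pos hcΩpos hcΩpos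
              linarith only [h0]
  have hmax : cdMeasure G Ω = 4 * cΩ ^ 2 := hEq Ω le_rfl
  constructor
  · -- CD G = {H | center ≤ H}
    ext H
    simp only [CD, Set.mem_setOf_eq]
    rw [hZ]
    constructor
    · intro hH
      by_contra hc
      have h1 := hH Ω
      rw [hmax] at h1
      exact absurd h1 (not_le.mpr (hLt H hc))
    · intro hH K
      rw [hEq H hH]
      by_cases hK : Ω ≤ K
      · exact (hEq K hK).le
      · exact (hLt K hK).le
  · -- the interval (Z(G), G) consists of exactly three subgroups
    have hx2Ω : x ^ 2 ∈ Ω := by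
      refine (hΩmem _).mpr ⟨hx2, ?_⟩
      have h1 := hinv (x ^ 2) hx2
      have h2 : x * x ^ 2 * x⁻¹ = x ^ 2 := by group
      rw [pow_two]; exact eq_inv_iff_mul_eq_one.mp (h2.symm.trans h1)
    set y₂ := a₀ * x with hy₂def
    have hy₂sq : y₂ ^ 2 = x ^ 2 := by
      have h' := hinv a₀ ha₀
      calc (a₀ * x) ^ 2 = a₀ * (x * a₀ * x⁻¹) * x ^ 2 := by rw [pow_two, pow_two]; group
        _ = a₀ * a₀⁻¹ * x ^ 2 := by rw [h']
        _ = x ^ 2 := by group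
    have hy₂Ω : y₂ ^ 2 ∈ Ω := hy₂sq ▸ hx2Ω
    have hy₂A : y₂ ∉ A := fun e => hx (by
      have h1 : a₀⁻¹ * (a₀ * x) ∈ A := A.mul_mem (A.inv_mem ha₀) e
      simpa using h1)
    set M₁ := cosetSub G Ω hΩle x hx2Ω with hM₁
    set M₂ := cosetSub G Ω hΩle y₂ hy₂Ω with hM₂
    have ha₀Ω : a₀ ∉ Ω := fun e => ha₀2 ((hΩmem a₀).mp e).2
    have hnotAΩ : ∀ g : G, g ∉ A → g ∉ Ω := fun g hg e => hg ((hΩmem g).mp e).1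
    have hxM₁ : x ∈ M₁ := Or.inr (by simpa using Ω.one_mem)
    have hy₂M₂ : y₂ ∈ M₂ := Or.inr (by simpa using Ω.one_mem)
    have ha₀M₁ : a₀ ∉ M₁ := by
      rintro (h | h)
      · exact ha₀Ω h
      · refine hxi ?_
        have h1 : a₀ * x⁻¹ ∈ A := ((hΩmem _).mp h).1
        have h2 : a₀⁻¹ * (a₀ * x⁻¹) ∈ A := A.mul_mem (A.inv_mem ha₀) h1
        simpa using h2
    have ha₀M₂ : a₀ ∉ M₂ := by
      rintro (h | h)
      · exact ha₀Ω h
      · have h1 : a₀ * y₂⁻¹ ∈ A := ((hΩmem _).mp h).1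
        have h2 : x⁻¹ = a₀⁻¹ * (a₀ * y₂⁻¹) * a₀ := by rw [hy₂def]; group
        exact hxi (by rw [h2]; exact A.mul_mem (A.mul_mem (A.inv_mem ha₀) h1) ha₀)
    have hxM₂ : x ∉ M₂ := by
      rintro (h | h)
      · exact hnotAΩ x hx h
      · have e : x * y₂⁻¹ = a₀⁻¹ := by rw [hy₂def]; group
        rw [e] at h
        have h2 : (a₀ ^ 2)⁻¹ = 1 := by rw [← inv_pow]; exact ((hΩmem _).mp h).2
        exact ha₀2 (inv_eq_one.mp h2)
    have hne1 : A ≠ M₁ := fun e => hx (by rw [e]; exact hxM₁)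
    have hne2 : A ≠ M₂ := fun e => hy₂A (by rw [e]; exact hy₂M₂)
    have hne3 : M₁ ≠ M₂ := fun e => hxM₂ (by rw [← e]; exact hxM₁)
    have hΩleM₁ : Ω ≤ M₁ := fun g hg => Or.inl hg
    have hΩleM₂ : Ω ≤ M₂ := fun g hg => Or.inl hg
    have hSet : {H : Subgroup G | Subgroup.center G < H ∧ H < ⊤} = {A, M₁, M₂} := by
      ext H
      simp only [Set.mem_setOf_eq, Set.mem_insert_iff, Set.mem_singleton_iff, hZ]
      constructor
      · rintro ⟨h1, h2⟩
        have hΩH := h1.le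
        have hHT : H ≠ ⊤ := h2.ne
        by_cases hHA : H ≤ A
        · rcases hdich H hΩH hHA with e | e
          · exact absurd e h1.ne'
          · exact Or.inl e
        · by_cases hQ : A ⊓ H ≤ Ω
          · obtain ⟨h, hhH, hhA⟩ : ∃ h, h ∈ H ∧ h ∉ A := by
              rw [SetLike.le_def] at hHA; push_neg at hHA; exact hHA
            have hh2 : h ^ 2 ∈ Ω := by
              refine (hΩmem _).mpr ⟨by rw [pow_two]; exact hmulA h hhA h hhA, ?_⟩
              have h1' := hconj h hhA (h ^ 2)
                (by rw [pow_two]; exact hmulA h hhA h hhA)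
              have h2' : h * h ^ 2 * h⁻¹ = h ^ 2 := by group
              rw [pow_two]; exact eq_inv_iff_mul_eq_one.mp (h2'.symm.trans h1')
            have hHM : H = cosetSub G Ω hΩle h hh2 := by
              ext g
              rw [mem_cosetSub]
              constructor
              · intro hg
                by_cases hgA : g ∈ A
                · exact Or.inl (hQ (Subgroup.mem_inf.mpr ⟨hgA, hg⟩))
                · refine Or.inr ?_
                  have hgh : g * h⁻¹ ∈ A :=
                    hmulA g hgA h⁻¹ (fun e => hhA (by simpa using A.inv_mem e))
                  exact hQ (Subgroup.mem_inf.mpr ⟨hgh, H.mul_mem hg (H.inv_mem hhH)⟩)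
              · rintro (hg | hg)
                · exact hΩH hg
                · have e : g = g * h⁻¹ * h := by group
                  rw [e]; exact H.mul_mem (hΩH hg) hhH
            have hhx : h * x⁻¹ ∈ A := hmulA h hhA x⁻¹ hxi
            by_cases hc : (h * x⁻¹) ^ 2 = 1
            · refine Or.inr (Or.inl ?_)
              rw [hHM, hM₁]
              exact cosetSub_congr hΩle hh2 hx2Ω ((hΩmem _).mpr ⟨hhx, hc⟩)
            · refine Or.inr (Or.inr ?_)
              rw [hHM, hM₂]
              refine cosetSub_congr hΩle hh2 hy₂Ω ?_
              have e : h * y₂⁻¹ = (h * x⁻¹) * a₀⁻¹ := by rw [hy₂def]; group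
              refine (hΩmem _).mpr ⟨?_, ?_⟩
              · rw [e]; exact A.mul_mem hhx (A.inv_mem ha₀)
              · rw [e]
                have hcm : Commute (h * x⁻¹) a₀⁻¹ :=
                  Subgroup.mul_comm_of_mem_isMulCommutative (H := A) hhx (A.inv_mem ha₀)
                rw [hcm.mul_pow, inv_pow, hsq_eq (h * x⁻¹) hhx a₀ ha₀ hc ha₀2]
                simp
          · rw [SetLike.le_def] at hQ; push_neg at hQ
            obtain ⟨a, haAH, haΩ⟩ := hQ
            obtain ⟨haA, haH⟩ := Subgroup.mem_inf.mp haAH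
            exact absurd (htop H hΩH hHA ⟨a, haH, haA, haΩ⟩) hHT
      · rintro (rfl | rfl | rfl)
        · constructor
          · exact lt_of_le_of_ne hΩleA (by intro e; rw [← e] at ha₀; exact ha₀Ω ha₀)
          · exact lt_of_le_of_ne le_top (by intro e; exact hx (by rw [e]; trivial))
        · constructor
          · exact lt_of_le_of_ne hΩleM₁
              (by intro e; rw [← e] at hxM₁; exact hnotAΩ x hx hxM₁)
          · exact lt_of_le_of_ne le_top (by intro e; exact ha₀M₁ (by rw [e]; trivial))
        · constructor
          · exact lt_of_le_of_ne hΩleM₂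
              (by intro e; rw [← e] at hy₂M₂; exact hnotAΩ y₂ hy₂A hy₂M₂)
          · exact lt_of_le_of_ne le_top (by intro e; exact ha₀M₂ (by rw [e]; trivial))
    rw [hSet]
    exact Set.ncard_eq_three.mpr ⟨A, M₁, M₂, hne1, hne2, hne3, rfl⟩
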